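/- For every t with 0 ≤ t < 1/6, the derivative of c₁ satisfies c₁′(t) = −(5·d(t)·c₁(t))/(3·q(t)·c(t)) − (3·a(t)·z₂(t)·c₁(t))/(q(t)·c(t)). -/

import Mathlib

noncomputable def pFun (t : ℝ) : ℝ := 1 - 6 * t

noncomputable def rFun (s t : ℝ) : ℝ := Real.exp (-(7776 / 25) * (1 - s) ^ 2 * t ^ 3)

noncomputable def qFun (t : ℝ) : ℝ := pFun t ^ 3 / 6

noncomputable def yFun (t : ℝ) : ℝ := pFun t ^ 2

noncomputable def aFun (s t : ℝ) : ℝ := (5 / 6) * s * (1 - s) ^ 2 * pFun t ^ 5 * rFun s t ^ 2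

noncomputable def c1Fun (s t : ℝ) : ℝ := (5 / 6) * s * (1 - s) * pFun t ^ 2 * rFun s t

noncomputable def c2Fun (s t : ℝ) : ℝ := (5 / 6) * (1 - s) ^ 2 * pFun t ^ 3 * rFun s t ^ 2

noncomputable def cFun (s t : ℝ) : ℝ := c1Fun s t * c2Fun s t

noncomputable def dFun (s t : ℝ) : ℝ := (5 / 6) * s * (1 - s) ^ 3 * pFun t ^ 7 * rFun s t ^ 3

noncomputable def z0Fun (s t : ℝ) : ℝ := (5 / 6) * (1 - s) ^ 5 * pFun t ^ 9 * rFun s t ^ 3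

noncomputable def z1Fun (s t : ℝ) : ℝ := (1 - s) ^ 4 * (1 - pFun t) * pFun t ^ 6 * rFun s t ^ 2

noncomputable def z2Fun (s t : ℝ) : ℝ :=
  (6 / 5) * (1 - s) ^ 3 * (1 - pFun t) ^ 2 * pFun t ^ 3 * rFun s t

theorem c1_hasDerivAt (s : ℝ) (hs0 : 0 < s) (hs1 : s < 1) (t : ℝ)
    (ht0 : 0 ≤ t) (ht : t < 1 / 6) :
    HasDerivAt (c1Fun s)
      (-(5 * dFun s t * c1Fun s t) / (3 * qFun t * cFun s t)
        - (3 * aFun s t * z2Fun s t * c1Fun s t) / (qFun t * cFun s t)) t := by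
  have hp : HasDerivAt pFun (-6) t := by
    have h := ((hasDerivAt_id t).const_mul (6 : ℝ)).const_sub 1
    simp only [mul_one] at h
    exact h
  have hg : HasDerivAt (fun u : ℝ => -(7776 / 25) * (1 - s) ^ 2 * u ^ 3)
      (-(7776 / 25) * (1 - s) ^ 2 * (3 * t ^ 2)) t := by
    have h := (hasDerivAt_pow 3 t).const_mul (-(7776 / 25) * (1 - s) ^ 2)
    exact h.congr_deriv (by norm_num)
  have hr : HasDerivAt (rFun s)
      (Real.exp (-(7776 / 25) * (1 - s) ^ 2 * t ^ 3) *
        (-(7776 / 25) * (1 - s) ^ 2 * (3 * t ^ 2))) t := by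
    have h := hg.exp
    exact h
  have hc1 := ((hp.pow 2).const_mul (5 / 6 * s * (1 - s))).mul hr
  have hpne : pFun t ≠ 0 := by simp only [pFun]; nlinarith
  have hrne : rFun s t ≠ 0 := Real.exp_ne_zero _
  have hsne : s ≠ 0 := ne_of_gt hs0
  have hs1ne : (1 : ℝ) - s ≠ 0 := by linarith
  refine hc1.congr_deriv ?_
  have hre : Real.exp (-(7776 / 25) * (1 - s) ^ 2 * t ^ 3) = rFun s t := rfl
  rw [hre]
  simp only [c1Fun, cFun, c2Fun, dFun, aFun, z2Fun, qFun, Pi.pow_apply, pFun] at *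
  field_simp
  ring
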